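/- Let G : ℝ^k → ℝ^n be a (k,d,n)-generative ReLU network with layer widths k = k_0 ≤ k_1,…,k_d, k_d = n. Then the difference set range(G) − range(G) := { G(x) − G(y) : x, y ∈ ℝ^k } is a union of at most (2e·k̄/k)^{2k(d−1)} polyhedral cones, each contained in a linear subspace of dimension at most 2k, where k̄ := (Π_{ℓ=1}^{d−1} k_ℓ)^{1/(d−1)} is the geometric mean of the hidden layer widths of G. -/

import Mathlib

/-- The hidden layers of a ReLU network: `hid k W j z = σ(W^{(j)} ⋯ σ(W^{(1)} z))`,
where `σ = max(·,0)` acts entrywise. -/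
noncomputable def hid (k : ℕ → ℕ) (W : ∀ i : ℕ, Matrix (Fin (k (i + 1))) (Fin (k i)) ℝ) :
    (j : ℕ) → (Fin (k 0) → ℝ) → Fin (k j) → ℝ
  | 0, z => z
  | (j + 1), z => fun t => max (Matrix.mulVec (W j) (hid k W j z) t) 0

/-- A `(k 0, d+1, k (d+1))`-generative ReLU network:
`genNet k W d z = W^{(d+1)} σ(W^{(d)} ⋯ σ(W^{(1)} z))` (so the paper's depth is `d+1`,
with hidden widths `k 1, …, k d` and output width `k (d+1)`). -/
noncomputable def genNet (k : ℕ → ℕ) (W : ∀ i : ℕ, Matrix (Fin (k (i + 1))) (Fin (k i)) ℝ)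
    (d : ℕ) (z : Fin (k 0) → ℝ) : Fin (k (d + 1)) → ℝ :=
  Matrix.mulVec (W d) (hid k W d z)

/-- A polyhedral cone: the set of conic (nonnegative) combinations of finitely many vectors. -/
def IsPolyhedralCone {n : ℕ} (C : Set (Fin n → ℝ)) : Prop :=
  ∃ (N : ℕ) (v : Fin N → Fin n → ℝ),
    C = {x | ∃ c : Fin N → ℝ, (∀ i, 0 ≤ c i) ∧ x = ∑ i, c i • v i}

open Finset

section Cones

variable {E F : Type*} [AddCommGroup E] [Module ℝ E] [AddCommGroup F] [Module ℝ F]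

def coneHull {ι : Type*} [Fintype ι] (v : ι → E) : Set E :=
  {x | ∃ c : ι → ℝ, (∀ i, 0 ≤ c i) ∧ x = ∑ i, c i • v i}

lemma sum_smul_mem_coneHull {ι κ : Type*} [Fintype ι] [Fintype κ] (v : ι → E) (u : κ → E)
    (c : κ → ℝ) (hc : ∀ a, 0 ≤ c a) (hu : ∀ a, u a ∈ coneHull v) :
    (∑ a, c a • u a) ∈ coneHull v := by
  choose d hd1 hd2 using hu
  refine ⟨fun i => ∑ a, c a * d a i, fun i => Finset.sum_nonneg fun a _ =>
    mul_nonneg (hc a) (hd1 a i), ?_⟩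
  calc ∑ a, c a • u a = ∑ a, ∑ i, (c a * d a i) • v i := by
        refine Finset.sum_congr rfl fun a _ => ?_
        rw [hd2 a, Finset.smul_sum]
        exact Finset.sum_congr rfl fun i _ => by rw [smul_smul]
    _ = ∑ i, (∑ a, c a * d a i) • v i := by
        rw [Finset.sum_comm]
        exact Finset.sum_congr rfl fun i _ => (Finset.sum_smul).symm

open Classical in
lemma coneHull_inter_halfspace {ι : Type*} [Fintype ι] (v : ι → E) (f : E →ₗ[ℝ] ℝ) :
    coneHull v ∩ {x | 0 ≤ f x} =
      coneHull (Sum.elim (fun i => if 0 ≤ f (v i) then v i else 0)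
        (fun p : ι × ι => if 0 ≤ f (v p.1) ∧ f (v p.2) < 0
          then f (v p.1) • v p.2 - f (v p.2) • v p.1 else 0)) := by
  set w := Sum.elim (fun i => if 0 ≤ f (v i) then v i else 0)
      (fun p : ι × ι => if 0 ≤ f (v p.1) ∧ f (v p.2) < 0
        then f (v p.1) • v p.2 - f (v p.2) • v p.1 else 0) with hw
  ext x
  constructor
  · rintro ⟨⟨c, hc, rfl⟩, hfx⟩
    simp only [Set.mem_setOf_eq] at hfx
    -- abbreviations
    set cP : ι → ℝ := fun i => if 0 ≤ f (v i) then c i else 0 with hcP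
    set cN : ι → ℝ := fun i => if 0 ≤ f (v i) then 0 else c i with hcN
    set gP : ι → ℝ := fun i => if 0 ≤ f (v i) then c i * f (v i) else 0 with hgP
    set gN : ι → ℝ := fun i => if 0 ≤ f (v i) then 0 else c i * (-(f (v i))) with hgN
    set A : ℝ := ∑ i, gP i with hA
    set B : ℝ := ∑ i, gN i with hB
    have hA0 : 0 ≤ A := Finset.sum_nonneg fun i _ => by
      by_cases h : 0 ≤ f (v i) <;> simp [hgP, h, mul_nonneg (hc i) ‹_›]
    have hB0 : 0 ≤ B := Finset.sum_nonneg fun i _ => by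
      by_cases h : 0 ≤ f (v i)
      · simp [hgN, h]
      · simp only [hgN, if_neg h]
        exact mul_nonneg (hc i) (by linarith [not_le.1 h])
    have hfxAB : f (∑ i, c i • v i) = A - B := by
      rw [map_sum, hA, hB, ← Finset.sum_sub_distrib]
      refine Finset.sum_congr rfl fun i _ => ?_
      by_cases h : 0 ≤ f (v i) <;> simp [hgP, hgN, h, map_smul, smul_eq_mul] <;> ring
    have hBA : B ≤ A := by rw [hfxAB] at hfx; linarith
    have hxsplit : ∑ i, c i • v i = (∑ i, cP i • v i) + (∑ i, cN i • v i) := by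
      rw [← Finset.sum_add_distrib]
      refine Finset.sum_congr rfl fun i _ => ?_
      by_cases h : 0 ≤ f (v i) <;> simp [hcP, hcN, h]
    by_cases hApos : A = 0
    · -- then B = 0 so all negative-side coefficients vanish
      have hBzero : B = 0 := le_antisymm (hApos ▸ hBA) hB0
      have hcN0 : ∀ i, cN i • v i = 0 := by
        intro i
        by_cases h : 0 ≤ f (v i)
        · simp [hcN, h]
        · have := (Finset.sum_eq_zero_iff_of_nonneg (fun j _ => by
            by_cases hj : 0 ≤ f (v j)
            · simp [hgN, hj]
            · simp only [hgN, if_neg hj]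
              exact mul_nonneg (hc j) (by linarith [not_le.1 hj]))).1 hBzero i (mem_univ i)
          simp only [hgN, if_neg h] at this
          have hci : c i = 0 := by
            rcases mul_eq_zero.1 this with h' | h'
            · exact h'
            · exact absurd h' (by simp; linarith [not_le.1 h])
          simp [hcN, h, hci]
      refine ⟨Sum.elim cP 0, ?_, ?_⟩
      · rintro (i | p)
        · simp only [Sum.elim_inl, hcP]; by_cases h : 0 ≤ f (v i) <;> simp [h, hc i]
        · simp
      · rw [Fintype.sum_sum_type]
        simp only [Sum.elim_inl, Sum.elim_inr, Pi.zero_apply, zero_smul, Finset.sum_const_zero,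
          add_zero]
        rw [hxsplit]
        have : ∑ i, cN i • v i = 0 := Finset.sum_eq_zero fun i _ => hcN0 i
        rw [this, add_zero]
        refine Finset.sum_congr rfl fun i _ => ?_
        simp only [hw, Sum.elim_inl, hcP]
        by_cases h : 0 ≤ f (v i) <;> simp [h]
    · have hApos' : 0 < A := lt_of_le_of_ne hA0 (Ne.symm hApos)
      refine ⟨Sum.elim (fun i => cP i * (1 - B / A)) (fun p => cP p.1 * cN p.2 / A), ?_, ?_⟩
      · rintro (i | p)
        · have h1 : 0 ≤ 1 - B / A := by
            rw [sub_nonneg, div_le_one hApos']; exact hBA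
          have : 0 ≤ cP i := by simp only [hcP]; by_cases h : 0 ≤ f (v i) <;> simp [h, hc i]
          exact mul_nonneg this h1
        · have h1 : 0 ≤ cP p.1 := by
            simp only [hcP]; by_cases h : 0 ≤ f (v p.1) <;> simp [h, hc p.1]
          have h2 : 0 ≤ cN p.2 := by
            simp only [hcN]; by_cases h : 0 ≤ f (v p.2) <;> simp [h, hc p.2]
          exact div_nonneg (mul_nonneg h1 h2) hA0
      · rw [Fintype.sum_sum_type]
        simp only [Sum.elim_inl, Sum.elim_inr]
        -- key pointwise identity for the pair generators
        have hkey : ∀ p : ι × ι, (cP p.1 * cN p.2 / A) • w (Sum.inr p)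
            = (gP p.1 * cN p.2 / A) • v p.2 + (cP p.1 * gN p.2 / A) • v p.1 := by
          rintro ⟨i, j⟩
          simp only [hw, Sum.elim_inr]
          by_cases hij : 0 ≤ f (v i) ∧ f (v j) < 0
          · rw [if_pos hij]
            have hi := hij.1
            have hj : ¬ 0 ≤ f (v j) := not_le.2 hij.2
            simp only [hcP, hcN, hgP, hgN, if_pos hi, if_neg hj]
            match_scalars <;> ring
          · rw [if_neg hij, smul_zero]
            by_cases hi : 0 ≤ f (v i)
            · have hj : 0 ≤ f (v j) := not_lt.1 fun hlt => hij ⟨hi, hlt⟩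
              simp [hcN, hgN, hj]
            · simp [hcP, hgP, hi]
        rw [Finset.sum_congr rfl fun p _ => hkey p, Finset.sum_add_distrib]
        have hsum1 : ∑ p : ι × ι, (gP p.1 * cN p.2 / A) • v p.2 = ∑ j, cN j • v j := by
          rw [Fintype.sum_prod_type]
          rw [Finset.sum_comm]
          refine Finset.sum_congr rfl fun j _ => ?_
          dsimp only
          rw [← Finset.sum_smul]
          congr 1
          rw [← Finset.sum_div, ← Finset.sum_mul, ← hA, mul_comm]
          field_simp
        have hsum2 : ∑ p : ι × ι, (cP p.1 * gN p.2 / A) • v p.1 = (B / A) • ∑ i, cP i • v i := by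
          rw [Fintype.sum_prod_type, Finset.smul_sum]
          refine Finset.sum_congr rfl fun i _ => ?_
          dsimp only
          rw [← Finset.sum_smul, smul_smul]
          congr 1
          rw [← Finset.sum_div, ← Finset.mul_sum, ← hB]
          ring
        have hsum0 : ∑ i, (cP i * (1 - B / A)) • w (Sum.inl i)
            = (1 - B / A) • ∑ i, cP i • v i := by
          rw [Finset.smul_sum]
          refine Finset.sum_congr rfl fun i _ => ?_
          simp only [hw, Sum.elim_inl, hcP]
          by_cases h : 0 ≤ f (v i) <;> simp [h, smul_smul] <;> ring_nf
        rw [hsum0, hsum1, hsum2, hxsplit]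
        set X := ∑ i, cP i • v i with hX
        set Y := ∑ i, cN i • v i with hY
        have hXX : (1 - B / A) • X + (B / A) • X = X := by
          rw [← add_smul]
          norm_num
        rw [add_comm Y ((B / A) • X), ← add_assoc, hXX]
  · rintro ⟨c, hc, rfl⟩
    constructor
    · -- each generator is in coneHull v
      have : ∀ a, w a ∈ coneHull v := by
        rintro (i | ⟨i, j⟩)
        · simp only [hw, Sum.elim_inl]
          by_cases h : 0 ≤ f (v i)
          · rw [if_pos h]
            exact ⟨fun t => if t = i then 1 else 0, fun t => by positivity, by simp⟩
          · rw [if_neg h]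
            exact ⟨0, fun _ => le_rfl, by simp⟩
        · simp only [hw, Sum.elim_inr]
          by_cases h : 0 ≤ f (v i) ∧ f (v j) < 0
          · rw [if_pos h]
            refine ⟨fun t => (if t = i then -f (v j) else 0) + (if t = j then f (v i) else 0),
              fun t => add_nonneg (by split <;> [linarith [h.2]; exact le_rfl])
                (by split <;> [exact h.1; exact le_rfl]), ?_⟩
            rw [Finset.sum_congr rfl (fun t _ => add_smul _ _ (v t)), Finset.sum_add_distrib]
            simp only [ite_smul, zero_smul, Finset.sum_ite_eq', mem_univ, if_pos]
            module
          · rw [if_neg h]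
            exact ⟨0, fun _ => le_rfl, by simp⟩
      have := sum_smul_mem_coneHull v w c hc this
      exact this
    · -- f is nonneg on each generator
      simp only [Set.mem_setOf_eq, map_sum]
      refine Finset.sum_nonneg fun a _ => ?_
      rw [map_smul, smul_eq_mul]
      refine mul_nonneg (hc a) ?_
      rcases a with i | ⟨i, j⟩
      · simp only [hw, Sum.elim_inl]
        by_cases h : 0 ≤ f (v i) <;> simp [h]
      · simp only [hw, Sum.elim_inr]
        by_cases h : 0 ≤ f (v i) ∧ f (v j) < 0
        · rw [if_pos h]
          have h0 : f (f (v i) • v j - f (v j) • v i) = 0 := by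
            rw [map_sub, map_smul, map_smul, smul_eq_mul, smul_eq_mul]; ring
          rw [h0]
        · simp [h]

end Cones

section Weyl

variable {E : Type*} [AddCommGroup E] [Module ℝ E]

/-- An H-cone: finite intersection of homogeneous halfspaces. -/
def IsHCone (P : Set E) : Prop :=
  ∃ (p : ℕ) (f : Fin p → E →ₗ[ℝ] ℝ), P = {z | ∀ t, 0 ≤ f t z}

lemma isHCone_univ : IsHCone (Set.univ : Set E) :=
  ⟨0, Fin.elim0, by ext z; simp [Fin.forall_fin_zero_pi]⟩

lemma isHCone_of_fintype {ι : Type*} [Fintype ι] (φ : ι → E →ₗ[ℝ] ℝ) :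
    IsHCone {z : E | ∀ a, 0 ≤ φ a z} := by
  refine ⟨Fintype.card ι, fun t => φ ((Fintype.equivFin ι).symm t), ?_⟩
  ext z
  simp only [Set.mem_setOf_eq]
  constructor
  · exact fun h t => h _
  · intro h a
    have := h (Fintype.equivFin ι a)
    simpa using this

lemma IsHCone.exists_coneHull [FiniteDimensional ℝ E] {P : Set E} (h : IsHCone P) :
    ∃ (ι : Type) (_ : Fintype ι) (v : ι → E), P = coneHull v := by
  obtain ⟨p, f, rfl⟩ := h
  induction p with
  | zero =>
      -- whole space
      classical
      set n := Module.finrank ℝ E with hn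
      let b := Module.finBasis ℝ E
      refine ⟨Fin n ⊕ Fin n, inferInstance, Sum.elim (fun i => (b i : E)) (fun i => -(b i : E)), ?_⟩
      ext z
      simp only [Set.mem_setOf_eq, coneHull]
      refine ⟨fun _ => ?_, fun _ t => t.elim0⟩
      refine ⟨Sum.elim (fun i => max (b.repr z i) 0) (fun i => max (-(b.repr z i)) 0), ?_, ?_⟩
      · rintro (i | i) <;> simp only [Sum.elim_inl, Sum.elim_inr] <;> exact le_max_right _ _
      · rw [Fintype.sum_sum_type]
        simp only [Sum.elim_inl, Sum.elim_inr]
        have key : ∀ i : Fin n, max (b.repr z i) 0 • (b i : E)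
            + max (-(b.repr z i)) 0 • (-(b i : E)) = b.repr z i • (b i : E) := by
          intro i
          rcases le_total (b.repr z i) 0 with h | h
          · rw [max_eq_right h, max_eq_left (by linarith), zero_smul, zero_add, smul_neg,
              ← neg_smul, neg_neg]
          · rw [max_eq_left h, max_eq_right (by linarith), zero_smul, add_zero]
        rw [← Finset.sum_add_distrib, Finset.sum_congr rfl fun i _ => key i]
        exact (b.sum_repr z).symm
  | succ q ih =>
      obtain ⟨ι, hι, v, hv⟩ := ih (fun t => f t.succ)
      have hsplit : {z : E | ∀ t, 0 ≤ f t z}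
          = coneHull v ∩ {z : E | 0 ≤ f 0 z} := by
        rw [← hv]
        ext z
        simp only [Set.mem_setOf_eq, Set.mem_inter_iff]
        constructor
        · exact fun h => ⟨fun t => h t.succ, h 0⟩
        · rintro ⟨h1, h2⟩ t
          rcases Fin.eq_zero_or_eq_succ t with rfl | ⟨t', rfl⟩
          · exact h2
          · exact h1 t'
      rw [hsplit, coneHull_inter_halfspace v (f 0)]
      exact ⟨_, inferInstance, _, rfl⟩

end Weyl

section Image

variable {E : Type*} [AddCommGroup E] [Module ℝ E]

lemma coneHull_image {F : Type*} [AddCommGroup F] [Module ℝ F] (ψ : E →ₗ[ℝ] F)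
    {ι : Type*} [Fintype ι] (v : ι → E) :
    ψ '' coneHull v = coneHull (fun i => ψ (v i)) := by
  ext x
  constructor
  · rintro ⟨y, ⟨c, hc, rfl⟩, rfl⟩
    exact ⟨c, hc, by simp [map_sum, map_smul]⟩
  · rintro ⟨c, hc, rfl⟩
    exact ⟨∑ i, c i • v i, ⟨c, hc, rfl⟩, by simp [map_sum, map_smul]⟩

lemma isPolyhedralCone_coneHull {n : ℕ} {ι : Type*} [Fintype ι] (v : ι → Fin n → ℝ) :
    IsPolyhedralCone (coneHull v) := by
  classical
  set e := Fintype.equivFin ι with he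
  refine ⟨Fintype.card ι, fun t => v (e.symm t), ?_⟩
  ext x
  constructor
  · rintro ⟨c, hc, rfl⟩
    refine ⟨fun t => c (e.symm t), fun t => hc _, ?_⟩
    exact Fintype.sum_equiv e _ _ (fun i => by simp)
  · rintro ⟨c, hc, rfl⟩
    refine ⟨fun i => c (e i), fun i => hc _, ?_⟩
    exact Fintype.sum_equiv e.symm _ _ (fun t => by simp)

lemma IsHCone.isPolyhedralCone_image [FiniteDimensional ℝ E] {n : ℕ}
    (ψ : E →ₗ[ℝ] (Fin n → ℝ)) {P : Set E} (h : IsHCone P) :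
    IsPolyhedralCone (ψ '' P) := by
  obtain ⟨ι, hι, v, rfl⟩ := h.exists_coneHull
  rw [coneHull_image]
  exact isPolyhedralCone_coneHull _

end Image

section Perturb

variable {E : Type*} [AddCommGroup E] [Module ℝ E]

lemma perturb {ι : Type*} [Fintype ι] (g : ι → E →ₗ[ℝ] ℝ) (w : E) :
    ∃ w' : E, ∀ i, (g i ≠ 0 → g i w' ≠ 0) ∧ (0 < g i w → 0 < g i w')
      ∧ (g i w < 0 → g i w' < 0) := by
  classical
  set Z := fun w : E => (Finset.univ.filter (fun i => g i ≠ 0 ∧ g i w = 0)) with hZdef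
  -- strong induction on the number of "bad" indices
  suffices H : ∀ (m : ℕ) (w : E), (Z w).card ≤ m → ∃ w' : E, ∀ i,
      (g i ≠ 0 → g i w' ≠ 0) ∧ (0 < g i w → 0 < g i w') ∧ (g i w < 0 → g i w' < 0) by
    exact H (Z w).card w le_rfl
  intro m
  induction m with
  | zero =>
      intro w hcard
      refine ⟨w, fun i => ⟨fun hg => ?_, fun h => h, fun h => h⟩⟩
      intro h0
      have : i ∈ Z w := by simp [hZdef, hg, h0]
      simp [Finset.card_eq_zero.1 (Nat.le_zero.1 hcard)] at this
  | succ m ih =>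
      intro w hcard
      by_cases hzero : (Z w).Nonempty
      · obtain ⟨i0, hi0⟩ := hzero
        have hi0' : g i0 ≠ 0 ∧ g i0 w = 0 := by simpa [hZdef] using hi0
        obtain ⟨u, hu⟩ : ∃ u, g i0 u ≠ 0 := by
          by_contra hco
          push_neg at hco
          exact hi0'.1 (LinearMap.ext fun x => hco x)
        -- choose a small positive step
        set F := Finset.univ.filter (fun i => g i w ≠ 0) with hF
        set t : ℝ := if hne : F.Nonempty
          then (F.inf' hne (fun i => |g i w| / (|g i u| + 1))) / 2 else 1 with ht
        have ht0 : 0 < t := by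
          rw [ht]
          split
          · refine div_pos ?_ two_pos
            rw [Finset.lt_inf'_iff]
            intro i hi
            have : g i w ≠ 0 := by simpa [hF] using hi
            positivity
          · norm_num
        have htsmall : ∀ i, g i w ≠ 0 → t * |g i u| < |g i w| := by
          intro i hi
          have hiF : i ∈ F := by simp [hF, hi]
          have hne : F.Nonempty := ⟨i, hiF⟩
          rw [ht, dif_pos hne]
          have h1 : F.inf' hne (fun i => |g i w| / (|g i u| + 1)) ≤ |g i w| / (|g i u| + 1) :=
            Finset.inf'_le _ hiF
          have h2 : 0 < F.inf' hne (fun i => |g i w| / (|g i u| + 1)) := by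
            rw [Finset.lt_inf'_iff]
            intro j hj
            have : g j w ≠ 0 := by simpa [hF] using hj
            positivity
          have habs : (0:ℝ) ≤ |g i u| := abs_nonneg _
          have hlt : |g i w| / (|g i u| + 1) * (|g i u| + 1) = |g i w| := by
            field_simp
          nlinarith [abs_pos.2 hi]
        set w2 := w + t • u with hw2
        have hsign : ∀ i, (0 < g i w → 0 < g i w2) ∧ (g i w < 0 → g i w2 < 0) := by
          intro i
          constructor <;> intro hs
          · have := htsmall i (ne_of_gt hs)
            have habs : |t * g i u| = t * |g i u| := by
              rw [abs_mul, abs_of_pos ht0]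
            have : g i w2 = g i w + t * g i u := by
              simp [hw2, map_add, map_smul, smul_eq_mul]
            rw [this]
            have h3 := htsmall i (ne_of_gt hs)
            have := neg_abs_le (t * g i u)
            have := abs_mul t (g i u)
            have := abs_of_pos ht0
            have := abs_of_pos hs
            nlinarith [neg_abs_le (t * g i u), abs_nonneg (g i u)]
          · have h3 := htsmall i (ne_of_lt hs)
            have : g i w2 = g i w + t * g i u := by
              simp [hw2, map_add, map_smul, smul_eq_mul]
            rw [this]
            have := le_abs_self (t * g i u)
            have := abs_mul t (g i u)
            have := abs_of_pos ht0
            have := abs_of_neg hs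
            nlinarith [le_abs_self (t * g i u), abs_nonneg (g i u)]
        have hZless : (Z w2).card ≤ m := by
          have hsub : Z w2 ⊆ Z w \ {i0} := by
            intro i hi
            have hi' : g i ≠ 0 ∧ g i w2 = 0 := by simpa [hZdef] using hi
            rw [Finset.mem_sdiff, Finset.mem_singleton]
            constructor
            · rw [hZdef]
              simp only [Finset.mem_filter, Finset.mem_univ, true_and]
              refine ⟨hi'.1, ?_⟩
              by_contra h0
              rcases lt_or_gt_of_ne h0 with h | h
              · exact absurd hi'.2 (ne_of_lt ((hsign i).2 h))
              · exact absurd hi'.2 (ne_of_gt ((hsign i).1 h))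
            · rintro rfl
              have heq : g i w2 = t * g i u := by
                simp [hw2, map_add, map_smul, smul_eq_mul, hi0'.2]
              rw [heq] at hi'
              exact (mul_ne_zero (ne_of_gt ht0) hu) hi'.2
          calc (Z w2).card ≤ (Z w \ {i0}).card := Finset.card_le_card hsub
            _ = (Z w).card - 1 := by rw [Finset.card_sdiff_of_subset (by simpa using hi0)]; simp
            _ ≤ m := by omega
        obtain ⟨w', hw'⟩ := ih w2 hZless
        refine ⟨w', fun i => ⟨(hw' i).1, fun h => (hw' i).2.1 ((hsign i).1 h),
          fun h => (hw' i).2.2 ((hsign i).2 h)⟩⟩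
      · -- no bad indices: w itself works
        refine ⟨w, fun i => ⟨fun hg h0 => ?_, fun h => h, fun h => h⟩⟩
        exact hzero ⟨i, by simp [hZdef, hg, h0]⟩

end Perturb

section Count

open Classical in
/-- Sign patterns of a family of functionals strictly realizable on `V` (with coordinates
outside `T` forced to `true`). -/
noncomputable def realizSet {E : Type*} [AddCommGroup E] [Module ℝ E] {ι : Type*} [Fintype ι]
    (f : ι → E →ₗ[ℝ] ℝ) (V : Submodule ℝ E) (T : Finset ι) : Finset (ι → Bool) :=
  Finset.univ.filter (fun s => (∀ i ∉ T, s i = true) ∧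
    ∃ z ∈ V, ∀ i ∈ T, if s i = true then 0 < f i z else f i z < 0)

variable {E : Type*} [AddCommGroup E] [Module ℝ E] {ι : Type*} [Fintype ι]

lemma mem_realizSet {f : ι → E →ₗ[ℝ] ℝ} {V : Submodule ℝ E} {T : Finset ι} {s : ι → Bool} :
    s ∈ realizSet f V T ↔ (∀ i ∉ T, s i = true) ∧
      ∃ z ∈ V, ∀ i ∈ T, if s i = true then 0 < f i z else f i z < 0 := by
  classical
  simp [realizSet]

lemma realizSet_card_le [FiniteDimensional ℝ E] (f : ι → E →ₗ[ℝ] ℝ) (T : Finset ι)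
    (V : Submodule ℝ E) :
    (realizSet f V T).card ≤ ∑ j ∈ Finset.range (Module.finrank ℝ V + 1), T.card.choose j := by
  classical
  induction T using Finset.induction generalizing V with
  | empty =>
      have h1 : (realizSet f V ∅).card ≤ 1 := by
        refine Finset.card_le_one.2 fun s hs s' hs' => ?_
        rw [mem_realizSet] at hs hs'
        funext i
        rw [hs.1 i (by simp), hs'.1 i (by simp)]
      calc (realizSet f V ∅).card ≤ 1 := h1
        _ = (∅ : Finset ι).card.choose 0 := by simp
        _ ≤ _ := by
            refine Finset.single_le_sum (f := fun j => (∅ : Finset ι).card.choose j)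
              (fun j _ => Nat.zero_le _) (by simp)
  | @insert a T' ha ih =>
      set m := Module.finrank ℝ V with hm
      set B := realizSet f V (insert a T') with hB
      set R' := realizSet f V T' with hR'
      set proj : (ι → Bool) → (ι → Bool) := fun s => Function.update s a true with hproj
      set Bt := B.filter (fun s => s a = true) with hBt
      set Bf := B.filter (fun s => ¬(s a = true)) with hBf
      have hcards : Bt.card + Bf.card = B.card := Finset.card_filter_add_card_filter_not _
      -- Bt is included in R'
      have hBtR : Bt ⊆ R' := by
        intro s hs
        rw [hBt, Finset.mem_filter] at hs
        obtain ⟨hsB, hsa⟩ := hs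
        rw [hB, mem_realizSet] at hsB
        rw [hR', mem_realizSet]
        obtain ⟨hforce, z, hzV, hz⟩ := hsB
        refine ⟨fun i hi => ?_, z, hzV, fun i hi => hz i (Finset.mem_insert_of_mem hi)⟩
        by_cases hia : i = a
        · rwa [hia]
        · exact hforce i (by simp [hia, hi])
      -- proj is injective on Bf and maps into R'
      have hinj : Set.InjOn proj Bf := by
        intro s hs s' hs' hss
        rw [Finset.mem_coe, hBf, Finset.mem_filter] at hs
        rw [Finset.mem_coe, hBf, Finset.mem_filter] at hs'
        funext i
        by_cases hia : i = a
        · subst hia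
          rw [Bool.not_eq_true] at hs hs'
          rw [hs.2, hs'.2]
        · have := congrFun hss i
          simp only [hproj] at this
          rwa [Function.update_of_ne hia, Function.update_of_ne hia] at this
      have hBfR : Bf.image proj ⊆ R' := by
        intro s' hs'
        rw [Finset.mem_image] at hs'
        obtain ⟨s, hs, rfl⟩ := hs'
        rw [hBf, Finset.mem_filter] at hs
        obtain ⟨hsB, hsa⟩ := hs
        rw [hB, mem_realizSet] at hsB
        obtain ⟨hforce, z, hzV, hz⟩ := hsB
        rw [hR', mem_realizSet]
        refine ⟨fun i hi => ?_, z, hzV, fun i hi => ?_⟩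
        · by_cases hia : i = a
          · subst hia; simp [hproj]
          · simp only [hproj]
            rw [Function.update_of_ne hia]
            exact hforce i (by simp [hia, hi])
        · have hia : i ≠ a := fun h => ha (h ▸ hi)
          simp only [hproj]
          rw [Function.update_of_ne hia]
          exact hz i (Finset.mem_insert_of_mem hi)
      -- the doubly extendable patterns lie in realizSet on V ⊓ ker (f a)
      have hD : Bt ∩ Bf.image proj ⊆ realizSet f (V ⊓ LinearMap.ker (f a)) T' := by
        intro s' hs'
        rw [Finset.mem_inter] at hs'
        obtain ⟨hs't, hs'f⟩ := hs'
        rw [hBt, Finset.mem_filter] at hs't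
        obtain ⟨hs'B, hs'a⟩ := hs't
        rw [hB, mem_realizSet] at hs'B
        obtain ⟨hforce, zp, hzpV, hzp⟩ := hs'B
        rw [Finset.mem_image] at hs'f
        obtain ⟨s, hs, hss⟩ := hs'f
        rw [hBf, Finset.mem_filter] at hs
        obtain ⟨hsB, hsa⟩ := hs
        rw [hB, mem_realizSet] at hsB
        obtain ⟨hforce2, zm, hzmV, hzm⟩ := hsB
        -- f a zp > 0, f a zm < 0
        have hfp : 0 < f a zp := by
          have := hzp a (Finset.mem_insert_self a T')
          rwa [if_pos hs'a] at this
        have hfm : f a zm < 0 := by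
          have := hzm a (Finset.mem_insert_self a T')
          rw [Bool.not_eq_true] at hsa
          rwa [if_neg (by simp [hsa])] at this
        set τ : ℝ := (-(f a zm)) / (f a zp - f a zm) with hτ
        have hden : 0 < f a zp - f a zm := by linarith
        have hτ0 : 0 < τ := div_pos (by linarith) hden
        have hτ1 : 0 < 1 - τ := by
          rw [hτ]
          rw [sub_pos, div_lt_one hden]
          linarith
        set z0 := τ • zp + (1 - τ) • zm with hz0
        have hz0V : z0 ∈ V := V.add_mem (V.smul_mem _ hzpV) (V.smul_mem _ hzmV)
        have hz0ker : f a z0 = 0 := by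
          rw [hz0, map_add, map_smul, map_smul, smul_eq_mul, smul_eq_mul, hτ]
          field_simp
          ring
        rw [mem_realizSet]
        refine ⟨fun i hi => ?_, z0, Submodule.mem_inf.2 ⟨hz0V, LinearMap.mem_ker.2 hz0ker⟩,
          fun i hi => ?_⟩
        · by_cases hia : i = a
          · subst hia; exact hs'a
          · exact hforce i (by simp [hia, hi])
        · have hia : i ≠ a := fun h => ha (h ▸ hi)
          have h1 := hzp i (Finset.mem_insert_of_mem hi)
          have h2 := hzm i (Finset.mem_insert_of_mem hi)
          have hsi : s i = s' i := by
            rw [← hss]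
            simp only [hproj]
            rw [Function.update_of_ne hia]
          rw [hsi] at h2
          have hval : f i z0 = τ * f i zp + (1 - τ) * f i zm := by
            rw [hz0, map_add, map_smul, map_smul, smul_eq_mul, smul_eq_mul]
          by_cases hsv : s' i = true
          · rw [if_pos hsv] at h1 h2 ⊢
            rw [hval]
            nlinarith
          · rw [if_neg hsv] at h1 h2 ⊢
            rw [hval]
            nlinarith
      -- combine the cardinalities
      have hcard2 : B.card ≤ R'.card + (Bt ∩ Bf.image proj).card := by
        have himcard : (Bf.image proj).card = Bf.card :=
          Finset.card_image_of_injOn hinj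
        have : Bt.card + (Bf.image proj).card
            = (Bt ∪ Bf.image proj).card + (Bt ∩ Bf.image proj).card :=
          (Finset.card_union_add_card_inter _ _).symm
        have hsub : Bt ∪ Bf.image proj ⊆ R' := Finset.union_subset hBtR hBfR
        calc B.card = Bt.card + Bf.card := hcards.symm
          _ = Bt.card + (Bf.image proj).card := by rw [himcard]
          _ = (Bt ∪ Bf.image proj).card + (Bt ∩ Bf.image proj).card := this
          _ ≤ R'.card + (Bt ∩ Bf.image proj).card := by
              exact Nat.add_le_add_right (Finset.card_le_card hsub) _
      by_cases hDempty : (Bt ∩ Bf.image proj).Nonempty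
      · -- there is a witness, so f a is not identically zero on V
        obtain ⟨s', hs'⟩ := hDempty
        have hfa : ∃ z ∈ V, f a z ≠ 0 := by
          have := Finset.mem_of_mem_inter_left hs'
          rw [hBt, Finset.mem_filter] at this
          obtain ⟨hs'B, hs'a⟩ := this
          rw [hB, mem_realizSet] at hs'B
          obtain ⟨_, z, hzV, hz⟩ := hs'B
          have := hz a (Finset.mem_insert_self a T')
          rw [if_pos hs'a] at this
          exact ⟨z, hzV, ne_of_gt this⟩
        have hlt : V ⊓ LinearMap.ker (f a) < V := by
          obtain ⟨z, hzV, hz⟩ := hfa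
          refine lt_of_le_of_ne inf_le_left fun h => ?_
          rw [← h] at hzV
          exact hz (LinearMap.mem_ker.1 (Submodule.mem_inf.1 hzV).2)
        have hrk : Module.finrank ℝ ↥(V ⊓ LinearMap.ker (f a)) < m :=
          Submodule.finrank_lt_finrank_of_lt hlt
        have hm1 : 1 ≤ m := by omega
        have hDcard : (Bt ∩ Bf.image proj).card
            ≤ ∑ j ∈ Finset.range m, T'.card.choose j := by
          calc (Bt ∩ Bf.image proj).card
              ≤ (realizSet f (V ⊓ LinearMap.ker (f a)) T').card :=
                Finset.card_le_card hD
            _ ≤ ∑ j ∈ Finset.range (Module.finrank ℝ ↥(V ⊓ LinearMap.ker (f a)) + 1),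
                  T'.card.choose j := ih _
            _ ≤ ∑ j ∈ Finset.range m, T'.card.choose j := by
                refine Finset.sum_le_sum_of_subset ?_
                exact Finset.range_subset_range.2 (by omega)
        have hfinal : B.card ≤ ∑ j ∈ Finset.range (m + 1), T'.card.choose j
            + ∑ j ∈ Finset.range m, T'.card.choose j :=
          le_trans hcard2 (Nat.add_le_add (ih V) hDcard)
        have hpascal : ∑ j ∈ Finset.range (m + 1), T'.card.choose j
            + ∑ j ∈ Finset.range m, T'.card.choose j
            = ∑ j ∈ Finset.range (m + 1), (T'.card + 1).choose j := by
          rw [Finset.sum_range_succ' (fun j => (T'.card + 1).choose j) m]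
          rw [Finset.sum_range_succ' (fun j => T'.card.choose j) m]
          simp only [Nat.choose_zero_right]
          have : ∀ j, (T'.card + 1).choose (j + 1) = T'.card.choose j + T'.card.choose (j + 1) :=
            fun j => Nat.choose_succ_succ _ _
          rw [Finset.sum_congr rfl fun j _ => this j, Finset.sum_add_distrib]
          ring
        rw [Finset.card_insert_of_notMem ha]
        omega
      · rw [Finset.not_nonempty_iff_eq_empty] at hDempty
        rw [hDempty] at hcard2
        simp only [Finset.card_empty, add_zero] at hcard2
        calc B.card ≤ R'.card := hcard2
          _ ≤ ∑ j ∈ Finset.range (m + 1), T'.card.choose j := ih V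
          _ ≤ ∑ j ∈ Finset.range (m + 1), (insert a T').card.choose j := by
              refine Finset.sum_le_sum fun j _ => ?_
              exact Nat.choose_le_choose j (Finset.card_le_card (Finset.subset_insert a T'))
end Count

section Numeric

lemma binom_sum_le_real (m p : ℕ) (hm : 1 ≤ m) (hmp : m ≤ p) :
    ((∑ j ∈ Finset.range (m + 1), p.choose j : ℕ) : ℝ)
      ≤ (Real.exp 1 * p / m) ^ m := by
  have hp : 0 < p := lt_of_lt_of_le hm hmp
  set x : ℝ := (m : ℝ) / p with hx
  have hx0 : 0 < x := by positivity
  have hx1 : x ≤ 1 := by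
    rw [hx, div_le_one (by positivity)]
    exact_mod_cast hmp
  have key : ((∑ j ∈ Finset.range (m + 1), p.choose j : ℕ) : ℝ) * x ^ m
      ≤ Real.exp 1 ^ m := by
    have h1 : ((∑ j ∈ Finset.range (m + 1), p.choose j : ℕ) : ℝ) * x ^ m
        = ∑ j ∈ Finset.range (m + 1), (p.choose j : ℝ) * x ^ m := by
      push_cast
      rw [Finset.sum_mul]
    rw [h1]
    have h2 : ∑ j ∈ Finset.range (m + 1), (p.choose j : ℝ) * x ^ m
        ≤ ∑ j ∈ Finset.range (m + 1), (p.choose j : ℝ) * x ^ j := by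
      refine Finset.sum_le_sum fun j hj => ?_
      have hjm : j ≤ m := by
        rw [Finset.mem_range] at hj; omega
      exact mul_le_mul_of_nonneg_left
        (pow_le_pow_of_le_one (le_of_lt hx0) hx1 hjm) (by positivity)
    have h3 : ∑ j ∈ Finset.range (m + 1), (p.choose j : ℝ) * x ^ j
        ≤ ∑ j ∈ Finset.range (p + 1), (p.choose j : ℝ) * x ^ j := by
      refine Finset.sum_le_sum_of_subset_of_nonneg
        (Finset.range_subset_range.2 (by omega)) fun j _ _ => by positivity
    have h4 : ∑ j ∈ Finset.range (p + 1), (p.choose j : ℝ) * x ^ j = (1 + x) ^ p := by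
      rw [add_comm (1:ℝ) x, add_pow]
      refine Finset.sum_congr rfl fun j hj => ?_
      rw [one_pow]
      ring
    have h5 : (1 + x) ^ p ≤ Real.exp x ^ p := by
      refine pow_le_pow_left₀ (by positivity) ?_ p
      rw [add_comm]
      exact Real.add_one_le_exp x
    have h6 : Real.exp x ^ p = Real.exp 1 ^ m := by
      rw [← Real.exp_nat_mul, ← Real.exp_nat_mul]
      congr 1
      rw [hx]
      field_simp
    linarith
  have hxm : 0 < x ^ m := by positivity
  rw [show Real.exp 1 * p / m = Real.exp 1 / x by rw [hx]; field_simp]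
  rw [div_pow]
  rw [le_div_iff₀ hxm]
  exact key

end Numeric

section Stage

variable (k : ℕ → ℕ) (W : ∀ i : ℕ, Matrix (Fin (k (i + 1))) (Fin (k i)) ℝ)

lemma stage (d : ℕ) (hk : 2 ≤ k 0) (hmono : ∀ i, i ≤ d + 1 → k 0 ≤ k i) :
    ∀ j, j ≤ d →
    ∃ (ι : Type) (_ : Fintype ι)
      (Λ : ι → ((Fin (k 0) → ℝ) × (Fin (k 0) → ℝ)) →ₗ[ℝ]
        ((Fin (k j) → ℝ) × (Fin (k j) → ℝ)))
      (P : ι → Set ((Fin (k 0) → ℝ) × (Fin (k 0) → ℝ))),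
      ((Fintype.card ι : ℝ) ≤ ∏ ℓ ∈ Finset.range j,
        (2 * Real.exp 1 * (k (ℓ + 1)) / (k 0)) ^ (2 * k 0)) ∧
      (∀ i, IsHCone (P i)) ∧
      (∀ i z, z ∈ P i → Λ i z = (hid k W j z.1, hid k W j z.2)) ∧
      (∀ z, ∃ i, z ∈ P i) := by
  intro j
  induction j with
  | zero =>
      intro _
      refine ⟨PUnit, inferInstance, fun _ => LinearMap.id, fun _ => Set.univ, ?_, ?_, ?_, ?_⟩
      · simp
      · intro _; exact isHCone_univ
      · intro _ z _
        simp [hid]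
      · intro z; exact ⟨PUnit.unit, Set.mem_univ z⟩
  | succ j ihj =>
      intro hj
      obtain ⟨ι, hι, Λ, P, hcard, hH, hlin, hcov⟩ := ihj (by omega)
      classical
      -- the next-layer functionals pulled back to the input space
      set g : ι → (Fin (k (j+1)) ⊕ Fin (k (j+1))) →
          (((Fin (k 0) → ℝ) × (Fin (k 0) → ℝ)) →ₗ[ℝ] ℝ) :=
        fun i => Sum.elim
          (fun t => (LinearMap.proj t).comp (((W j).mulVecLin).comp
            ((LinearMap.fst ℝ _ _).comp (Λ i))))
          (fun t => (LinearMap.proj t).comp (((W j).mulVecLin).comp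
            ((LinearMap.snd ℝ _ _).comp (Λ i)))) with hg
      have hgval1 : ∀ i t z, g i (Sum.inl t) z = (W j).mulVec ((Λ i z).1) t := fun i t z => rfl
      have hgval2 : ∀ i t z, g i (Sum.inr t) z = (W j).mulVec ((Λ i z).2) t := fun i t z => rfl
      set T : ι → Finset (Fin (k (j+1)) ⊕ Fin (k (j+1))) :=
        fun i => Finset.univ.filter (fun t => g i t ≠ 0) with hT
      set A : ι → Finset ((Fin (k (j+1)) ⊕ Fin (k (j+1))) → Bool) :=
        fun i => realizSet (g i) ⊤ (T i) with hA
      refine ⟨Σ i : ι, {ε // ε ∈ A i}, inferInstance,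
        fun q => LinearMap.prod
          (LinearMap.pi (fun t => if q.2.1 (Sum.inl t) = true then g q.1 (Sum.inl t) else 0))
          (LinearMap.pi (fun t => if q.2.1 (Sum.inr t) = true then g q.1 (Sum.inr t) else 0)),
        fun q => P q.1 ∩ {z | ∀ t, if q.2.1 t = true then 0 ≤ g q.1 t z else g q.1 t z ≤ 0},
        ?_, ?_, ?_, ?_⟩
      · -- cardinality bound
        set Bnat : ℕ := ∑ jj ∈ Finset.range (2 * k 0 + 1), (2 * k (j+1)).choose jj with hBnat
        have hrank : Module.finrank ℝ
            (⊤ : Submodule ℝ ((Fin (k 0) → ℝ) × (Fin (k 0) → ℝ))) = 2 * k 0 := by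
          rw [finrank_top, Module.finrank_prod, Module.finrank_pi, Fintype.card_fin, two_mul]
        have hAcard : ∀ i, (A i).card ≤ Bnat := by
          intro i
          calc (A i).card ≤ ∑ jj ∈ Finset.range (Module.finrank ℝ
                (⊤ : Submodule ℝ ((Fin (k 0) → ℝ) × (Fin (k 0) → ℝ))) + 1),
                  ((T i).card).choose jj := realizSet_card_le (g i) (T i) ⊤
            _ ≤ Bnat := by
                rw [hrank, hBnat]
                refine Finset.sum_le_sum fun jj _ => Nat.choose_le_choose jj ?_
                calc (T i).card ≤ Fintype.card (Fin (k (j+1)) ⊕ Fin (k (j+1))) :=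
                      Finset.card_le_univ _
                  _ = 2 * k (j+1) := by
                      rw [Fintype.card_sum, Fintype.card_fin]; ring
        have hcard' : Fintype.card (Σ i : ι, {ε // ε ∈ A i}) ≤ Fintype.card ι * Bnat := by
          rw [Fintype.card_sigma]
          calc ∑ i, Fintype.card {ε // ε ∈ A i} = ∑ i, (A i).card := by
                refine Finset.sum_congr rfl fun i _ => Fintype.card_coe _
            _ ≤ ∑ _i : ι, Bnat := Finset.sum_le_sum fun i _ => hAcard i
            _ = Fintype.card ι * Bnat := by
                rw [Finset.sum_const, Finset.card_univ, smul_eq_mul]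
        have hBreal : (Bnat : ℝ) ≤ (2 * Real.exp 1 * (k (j+1)) / (k 0)) ^ (2 * k 0) := by
          have hmp : 2 * k 0 ≤ 2 * k (j + 1) := by
            have := hmono (j+1) (by omega); omega
          have h1 := binom_sum_le_real (2 * k 0) (2 * k (j+1)) (by omega) hmp
          rw [hBnat]
          refine le_trans h1 ?_
          have hk0pos : (0:ℝ) < (k 0 : ℝ) := by
            have : 0 < k 0 := by omega
            exact_mod_cast this
          have heq : Real.exp 1 * ((2 * k (j+1) : ℕ) : ℝ) / ((2 * k 0 : ℕ) : ℝ)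
              = Real.exp 1 * (k (j+1)) / (k 0) := by
            push_cast
            field_simp
          rw [heq]
          refine pow_le_pow_left₀ (by positivity) ?_ _
          have h2 : Real.exp 1 * (k (j+1)) ≤ 2 * Real.exp 1 * (k (j+1)) := by
            have hexp : 0 < Real.exp 1 := Real.exp_pos 1
            have hkc : (0:ℝ) ≤ (k (j+1) : ℝ) := Nat.cast_nonneg _
            nlinarith
          exact div_le_div_of_nonneg_right h2 hk0pos.le
        have hprodnn : (0:ℝ) ≤ ∏ ℓ ∈ Finset.range j,
            (2 * Real.exp 1 * (k (ℓ + 1)) / (k 0)) ^ (2 * k 0) :=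
          Finset.prod_nonneg fun ℓ _ => pow_nonneg (by positivity) _
        calc (Fintype.card (Σ i : ι, {ε // ε ∈ A i}) : ℝ)
            ≤ (Fintype.card ι : ℝ) * (Bnat : ℝ) := by exact_mod_cast hcard'
          _ ≤ (∏ ℓ ∈ Finset.range j, (2 * Real.exp 1 * (k (ℓ + 1)) / (k 0)) ^ (2 * k 0))
              * ((2 * Real.exp 1 * (k (j+1)) / (k 0)) ^ (2 * k 0)) := by
              refine mul_le_mul hcard hBreal (Nat.cast_nonneg _) hprodnn
          _ = ∏ ℓ ∈ Finset.range (j+1),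
              (2 * Real.exp 1 * (k (ℓ + 1)) / (k 0)) ^ (2 * k 0) := by
              rw [Finset.prod_range_succ]
      · -- H-cone
        rintro ⟨i, ε, hε⟩
        dsimp only
        obtain ⟨p0, f0, hf0⟩ := hH i
        have : P i ∩ {z | ∀ t, if ε t = true then 0 ≤ g i t z else g i t z ≤ 0}
            = {z | ∀ a : Fin p0 ⊕ (Fin (k (j+1)) ⊕ Fin (k (j+1))),
                0 ≤ Sum.elim f0 (fun t => if ε t = true then g i t else -(g i t)) a z} := by
          ext z
          rw [hf0]
          simp only [Set.mem_inter_iff, Set.mem_setOf_eq]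
          constructor
          · rintro ⟨h1, h2⟩ (t0 | t)
            · exact h1 t0
            · rw [Sum.elim_inr]
              have := h2 t
              by_cases hεt : ε t = true
              · rw [if_pos hεt] at this ⊢; exact this
              · rw [if_neg hεt] at this ⊢
                rw [LinearMap.neg_apply, neg_nonneg]
                exact this
          · intro h
            refine ⟨fun t0 => h (Sum.inl t0), fun t => ?_⟩
            have := h (Sum.inr t)
            rw [Sum.elim_inr] at this
            by_cases hεt : ε t = true
            · rw [if_pos hεt] at this ⊢; exact this
            · rw [if_neg hεt] at this ⊢
              rw [LinearMap.neg_apply, neg_nonneg] at this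
              exact this
        rw [show (P i ∩ {z | ∀ t, if ε t = true then 0 ≤ g i t z else g i t z ≤ 0} :
          Set ((Fin (k 0) → ℝ) × (Fin (k 0) → ℝ))) = _ from this]
        exact isHCone_of_fintype _
      · -- linearity on the region
        rintro ⟨i, ε, hε⟩ z hz
        dsimp only at hz ⊢
        obtain ⟨hzP, hzC⟩ := hz
        have hΛ := hlin i z hzP
        have h1 : (Λ i z).1 = hid k W j z.1 := by rw [hΛ]
        have h2 : (Λ i z).2 = hid k W j z.2 := by rw [hΛ]
        refine Prod.ext ?_ ?_
        · funext t
          have := hzC (Sum.inl t)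
          simp only [LinearMap.prod_apply, LinearMap.pi_apply, Pi.prod]
          show (if ε (Sum.inl t) = true then g i (Sum.inl t) else 0) z
              = hid k W (j+1) z.1 t
          have hval : g i (Sum.inl t) z = (W j).mulVec (hid k W j z.1) t := by
            rw [hgval1, h1]
          have hhid : hid k W (j+1) z.1 t = max ((W j).mulVec (hid k W j z.1) t) 0 := rfl
          by_cases hεt : ε (Sum.inl t) = true
          · rw [if_pos hεt]
            rw [if_pos hεt] at this
            rw [hval] at this ⊢
            rw [hhid, max_eq_left this]
          · rw [if_neg hεt]
            rw [if_neg hεt] at this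
            rw [hval] at this
            rw [hhid, max_eq_right this]
            rfl
        · funext t
          have := hzC (Sum.inr t)
          simp only [LinearMap.prod_apply, LinearMap.pi_apply, Pi.prod]
          show (if ε (Sum.inr t) = true then g i (Sum.inr t) else 0) z
              = hid k W (j+1) z.2 t
          have hval : g i (Sum.inr t) z = (W j).mulVec (hid k W j z.2) t := by
            rw [hgval2, h2]
          have hhid : hid k W (j+1) z.2 t = max ((W j).mulVec (hid k W j z.2) t) 0 := rfl
          by_cases hεt : ε (Sum.inr t) = true
          · rw [if_pos hεt]
            rw [if_pos hεt] at this
            rw [hval] at this ⊢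
            rw [hhid, max_eq_left this]
          · rw [if_neg hεt]
            rw [if_neg hεt] at this
            rw [hval] at this
            rw [hhid, max_eq_right this]
            rfl
      · -- covering
        intro z
        obtain ⟨i, hzP⟩ := hcov z
        obtain ⟨w', hw'⟩ := perturb (fun t => g i t) z
        set ε : (Fin (k (j+1)) ⊕ Fin (k (j+1))) → Bool :=
          fun t => if g i t = 0 then true else (if 0 < g i t w' then true else false) with hε
        have hεA : ε ∈ A i := by
          rw [hA, mem_realizSet]
          constructor
          · intro t ht
            have hgt : g i t = 0 := by
              by_contra hne
              exact ht (by simp [hT, hne])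
            simp [hε, hgt]
          · refine ⟨w', Submodule.mem_top, fun t ht => ?_⟩
            have hgt : g i t ≠ 0 := by
              rw [hT] at ht
              simpa using ht
            by_cases hpos : 0 < g i t w'
            · rw [if_pos (by simp [hε, hgt, hpos])]
              exact hpos
            · rw [if_neg (by simp [hε, hgt, hpos])]
              have hne := (hw' t).1 hgt
              cases lt_or_gt_of_ne hne with
              | inl h => exact h
              | inr h => exact absurd h hpos
        refine ⟨⟨i, ⟨ε, hεA⟩⟩, hzP, fun t => ?_⟩
        by_cases hgt : g i t = 0
        · rw [if_pos (by simp [hε, hgt])]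
          rw [hgt]
          simp
        · rcases lt_trichotomy (g i t z) 0 with h | h | h
          · have hw := (hw' t).2.2 h
            have : ¬ (0 < g i t w') := by linarith
            rw [if_neg (by simp [hε, hgt, this])]
            exact le_of_lt h
          · by_cases hεt : ε t = true
            · rw [if_pos hεt, h]
            · rw [if_neg hεt, h]
          · have hw := (hw' t).2.1 h
            rw [if_pos (by simp [hε, hgt, hw])]
            exact le_of_lt h

end Stage

/-- the difference set `range(G) − range(G)` of a `(k, d, n)`-generative
ReLU network (here with depth `d+1`, input width `k = k 0`, hidden widths
`k 1, …, k d`, output width `n = k (d+1)`, each hidden width at least `k 0`) is a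
union of at most `(2e·k̄/k)^{2k·d} = ∏_{ℓ=1}^{d} (2e·k_ℓ/k)^{2k}` polyhedral cones,
each contained in a linear subspace of dimension at most `2k`. -/


theorem difference_set_is_union_of_cones
    (d : ℕ) (k : ℕ → ℕ) (W : ∀ i : ℕ, Matrix (Fin (k (i + 1))) (Fin (k i)) ℝ)
    (hk : 2 ≤ k 0) (hmono : ∀ i, i ≤ d + 1 → k 0 ≤ k i) :
    ∃ (N : ℕ) (S : Fin N → Set (Fin (k (d + 1)) → ℝ)),
      (N : ℝ) ≤ ∏ ℓ ∈ Finset.range d,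
          (2 * Real.exp 1 * (k (ℓ + 1)) / (k 0)) ^ (2 * k 0) ∧
      {u | ∃ x y, u = genNet k W d x - genNet k W d y} = ⋃ i, S i ∧
      (∀ i, IsPolyhedralCone (S i)) ∧
      (∀ i, ∃ E : Submodule ℝ (Fin (k (d + 1)) → ℝ),
          Module.finrank ℝ E ≤ 2 * k 0 ∧ S i ⊆ E) := by
  classical
  obtain ⟨ι, hι, Λ, P, hcard, hH, hlin, hcov⟩ := stage k W d hk hmono d le_rfl
  set e := Fintype.equivFin ι with he
  set Tlin : ((Fin (k d) → ℝ) × (Fin (k d) → ℝ)) →ₗ[ℝ] (Fin (k (d + 1)) → ℝ) :=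
    ((W d).mulVecLin.comp (LinearMap.fst ℝ _ _))
      - ((W d).mulVecLin.comp (LinearMap.snd ℝ _ _)) with hTlin
  have hTval : ∀ w : (Fin (k d) → ℝ) × (Fin (k d) → ℝ),
      Tlin w = (W d).mulVec w.1 - (W d).mulVec w.2 := fun w => rfl
  refine ⟨Fintype.card ι,
    fun t => (Tlin.comp (Λ (e.symm t))) '' (P (e.symm t)), hcard, ?_, ?_, ?_⟩
  · -- set equality
    ext u
    simp only [Set.mem_setOf_eq, Set.mem_iUnion]
    constructor
    · rintro ⟨x, y, rfl⟩
      obtain ⟨i, hzP⟩ := hcov (x, y)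
      refine ⟨e i, (x, y), by simpa using hzP, ?_⟩
      rw [LinearMap.comp_apply]
      have hsymm : e.symm (e i) = i := Equiv.symm_apply_apply e i
      rw [hsymm]
      rw [hlin i (x, y) hzP, hTval]
      rfl
    · rintro ⟨t, z, hz, rfl⟩
      refine ⟨z.1, z.2, ?_⟩
      rw [LinearMap.comp_apply, hlin (e.symm t) z hz, hTval]
      rfl
  · intro t
    exact (hH (e.symm t)).isPolyhedralCone_image _
  · intro t
    refine ⟨LinearMap.range (Tlin.comp (Λ (e.symm t))), ?_, ?_⟩
    · calc Module.finrank ℝ (LinearMap.range (Tlin.comp (Λ (e.symm t))))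
          ≤ Module.finrank ℝ ((Fin (k 0) → ℝ) × (Fin (k 0) → ℝ)) :=
            LinearMap.finrank_range_le _
        _ = 2 * k 0 := by
            rw [Module.finrank_prod, Module.finrank_pi, Fintype.card_fin, two_mul]
    · rintro u ⟨z, _, rfl⟩
      exact LinearMap.mem_range_self _ z
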